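/- For every natural number m, the following identity of formal power series in the variable z with coefficients in ℚ[x] holds: ∑_{p ≥ 0} (x−p)_m · z^p / p! = exp(z) · ∑_{j=0}^{m} (−1)^j · binom(m, j) · (x−j)_{m−j} · z^j, where (y)_n denotes the falling factorial y(y−1)⋯(y−n+1), exp(z) = ∑_{p≥0} z^p/p!, and binom denotes the binomial coefficient. -/

import Mathlib

/-!
Statement 13: the generating-function identity (from the proof of Proposition 4.3 of the paper)
`∑_{p≥0} (x−p)_m z^p / p! = exp(z) ∑_{j=0}^m (−1)^j C(m,j) (x−j)_{m−j} z^j`,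
as an identity of formal power series in `z` with coefficients in `ℚ[x]`.
-/

noncomputable section

/-- The falling factorial `(y)_n = y (y−1) ⋯ (y−n+1)` of an element of a commutative ring. -/
def fall {R : Type*} [CommRing R] (y : R) (n : ℕ) : R :=
  ∏ j ∈ Finset.range n, (y - (j : R))

lemma fall_succ {R : Type*} [CommRing R] (y : R) (n : ℕ) :
    fall y (n + 1) = fall y n * (y - n) := Finset.prod_range_succ _ _

lemma fall_succ' {R : Type*} [CommRing R] (y : R) (n : ℕ) :
    fall y (n + 1) = y * fall (y - 1) n := by
  rw [fall, Finset.prod_range_succ']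
  simp only [Nat.cast_zero, sub_zero]
  rw [fall, mul_comm]
  congr 1
  refine Finset.prod_congr rfl fun i _ => ?_
  push_cast
  ring

lemma fall_natCast {R : Type*} [CommRing R] (p : ℕ) :
    ∀ j : ℕ, fall ((p : R)) j = (p.descFactorial j : R) := by
  intro j
  induction j with
  | zero => simp [fall]
  | succ j ih =>
    rw [fall_succ, ih, Nat.descFactorial_succ]
    rcases lt_or_ge j p with h | h
    · rw [Nat.cast_mul, Nat.cast_sub h.le]
      ring
    · have h0 : p - j = 0 := Nat.sub_eq_zero_of_le h
      rw [h0]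
      rcases eq_or_lt_of_le h with rfl | h'
      · simp
      · rw [Nat.descFactorial_eq_zero_iff_lt.2 h']
        simp

lemma descFactorial_succ_left (p : ℕ) :
    ∀ j : ℕ, (p + 1).descFactorial j = p.descFactorial j + j * p.descFactorial (j - 1) := by
  intro j
  cases j with
  | zero => simp
  | succ j =>
    rw [Nat.succ_descFactorial_succ, Nat.descFactorial_succ, Nat.add_sub_cancel]
    rcases le_or_gt j p with h | h
    · have hh : p - j + (j + 1) = p + 1 := by omega
      rw [← Nat.add_mul, hh]
    · rw [Nat.descFactorial_eq_zero_iff_lt.2 h]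
      simp

lemma fall_key {R : Type*} [CommRing R] : ∀ (m : ℕ) (y : R) (p : ℕ),
    fall (y - (p : R)) m =
      ∑ j ∈ Finset.range (m + 1),
        (-1 : R) ^ j * (m.choose j : R) * fall (y - (j : R)) (m - j) * fall ((p : R)) j := by
  intro m
  induction m with
  | zero => intro y p; simp [fall]
  | succ m ihm =>
    intro y p
    induction p with
    | zero =>
      rw [Finset.sum_eq_single 0]
      · simp [fall]
      · intro j hj hj0
        obtain ⟨j, rfl⟩ := Nat.exists_eq_succ_of_ne_zero hj0
        rw [fall_natCast, Nat.zero_descFactorial_succ, Nat.cast_zero, mul_zero]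
      · intro h; simp at h
    | succ p ihp =>
      have hstep : ∀ j : ℕ, fall (((p + 1 : ℕ) : R)) j =
          fall ((p : R)) j + (j : R) * ((p.descFactorial (j - 1)) : R) := by
        intro j
        rw [fall_natCast, fall_natCast, descFactorial_succ_left]
        push_cast
        ring
      have e1 : ∑ j ∈ Finset.range (m + 1 + 1),
            (-1 : R) ^ j * ((m + 1).choose j : R) * fall (y - (j : R)) (m + 1 - j) *
              fall (((p + 1 : ℕ) : R)) j
          = (∑ j ∈ Finset.range (m + 1 + 1),
              (-1 : R) ^ j * ((m + 1).choose j : R) * fall (y - (j : R)) (m + 1 - j) *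
                fall ((p : R)) j)
            + ∑ j ∈ Finset.range (m + 1 + 1),
              (-1 : R) ^ j * ((m + 1).choose j : R) * fall (y - (j : R)) (m + 1 - j) *
                ((j : R) * ((p.descFactorial (j - 1)) : R)) := by
        rw [← Finset.sum_add_distrib]
        refine Finset.sum_congr rfl fun j _ => ?_
        rw [hstep j]
        ring
      have e2 : ∑ j ∈ Finset.range (m + 1 + 1),
            (-1 : R) ^ j * ((m + 1).choose j : R) * fall (y - (j : R)) (m + 1 - j) *
              ((j : R) * ((p.descFactorial (j - 1)) : R))
          = -((m : R) + 1) * ∑ j ∈ Finset.range (m + 1),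
              (-1 : R) ^ j * (m.choose j : R) * fall ((y - 1) - (j : R)) (m - j) *
                fall ((p : R)) j := by
        rw [Finset.sum_range_succ', Finset.mul_sum]
        simp only [Nat.cast_zero, zero_mul, mul_zero, add_zero]
        refine Finset.sum_congr rfl fun j hj => ?_
        have hc : ((m + 1 : ℕ) : R) * (m.choose j : R) =
            ((m + 1).choose (j + 1) : R) * ((j + 1 : ℕ) : R) := by
          exact_mod_cast congrArg (Nat.cast (R := R)) (Nat.add_one_mul_choose_eq m j)
        rw [fall_natCast p j]
        simp only [Nat.succ_sub_succ, Nat.sub_zero]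
        rw [show y - ((j + 1 : ℕ) : R) = (y - 1) - (j : R) by push_cast; ring]
        push_cast at hc ⊢
        linear_combination ((-1 : R) ^ j * fall ((y - 1) - (j : R)) (m - j) *
          ((p.descFactorial j : ℕ) : R)) * hc
      have harg : (y - 1) - (p : R) = y - (((p + 1 : ℕ)) : R) := by push_cast; ring
      have h1 : fall (y - (p : R)) (m + 1) =
          (y - (p : R)) * fall (y - (((p + 1 : ℕ)) : R)) m := by
        rw [fall_succ', show y - (p : R) - 1 = y - (((p + 1 : ℕ)) : R) by push_cast; ring]
      rw [e1, e2, ← ihp, ← ihm (y - 1) p, harg, h1, fall_succ]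
      push_cast
      ring

/-- for every natural number `m`, the power series over `ℚ[x]` whose `z^p`
coefficient is `(x−p)_m / p!` equals
`exp(z) · ∑_{j=0}^m (−1)^j C(m,j) (x−j)_{m−j} z^j`. -/
theorem stmt13 (m : ℕ) :
    (PowerSeries.mk fun p : ℕ =>
        ((p.factorial : ℚ))⁻¹ • fall ((Polynomial.X : Polynomial ℚ) - (p : Polynomial ℚ)) m) =
      PowerSeries.exp (Polynomial ℚ) *
        ∑ j ∈ Finset.range (m + 1),
          PowerSeries.C
              ((-1 : Polynomial ℚ) ^ j * (m.choose j : Polynomial ℚ) *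
                fall ((Polynomial.X : Polynomial ℚ) - (j : Polynomial ℚ)) (m - j)) *
            (PowerSeries.X : PowerSeries (Polynomial ℚ)) ^ j := by
  apply PowerSeries.ext
  intro p
  rw [PowerSeries.coeff_mk, Finset.mul_sum, map_sum,
    fall_key m (Polynomial.X : Polynomial ℚ) p, Finset.smul_sum]
  refine Finset.sum_congr rfl fun j hj => ?_
  rw [← mul_assoc, PowerSeries.coeff_mul_X_pow', PowerSeries.coeff_mul_C,
    PowerSeries.coeff_exp, Polynomial.algebraMap_eq, fall_natCast p j]
  by_cases hjp : j ≤ p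
  · rw [if_pos hjp]
    have hq : ((p.factorial : ℚ))⁻¹ * ((p.descFactorial j : ℕ) : ℚ) =
        1 / ((p - j).factorial : ℚ) := by
      have h := Nat.factorial_mul_descFactorial hjp
      have h' : (((p - j).factorial : ℕ) : ℚ) * ((p.descFactorial j : ℕ) : ℚ) =
          ((p.factorial : ℕ) : ℚ) := by exact_mod_cast congrArg Nat.cast h
      field_simp
      linarith [h']
    have hqC : Polynomial.C (((p.factorial : ℚ))⁻¹) *
        ((p.descFactorial j : ℕ) : Polynomial ℚ) =
        Polynomial.C (1 / ((p - j).factorial : ℚ)) := by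
      rw [← Polynomial.C_eq_natCast, ← map_mul, hq]
    rw [Polynomial.smul_eq_C_mul]
    linear_combination ((-1 : Polynomial ℚ) ^ j * (m.choose j : Polynomial ℚ) *
      fall ((Polynomial.X : Polynomial ℚ) - (j : Polynomial ℚ)) (m - j)) * hqC
  · rw [if_neg hjp, Nat.descFactorial_eq_zero_iff_lt.2 (Nat.lt_of_not_le hjp)]
    simp

end
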